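/- Let M be the 4×4 symmetric matrix with M_{01} = −1, M_{12} = M_{23} = M_{30} = 1 (and symmetric entries, zeros elsewhere: the weighted adjacency matrix of a 4-cycle with one edge of weight −1). Then (e^{itM})_{0,2} = 0 and (e^{itM})_{1,3} = 0 for all real t. -/

import Mathlib

open Matrix Complex

private lemma Msq : (!![0, -1, 0, 1; -1, 0, 1, 0; 0, 1, 0, 1; 1, 0, 1, 0] :
    Matrix (Fin 4) (Fin 4) ℂ) ^ 2 = (2 : ℂ) • 1 := by
  ext i j
  fin_cases i <;> fin_cases j <;>
    simp [pow_two, Matrix.mul_apply, Fin.sum_univ_four, Matrix.one_apply] <;> norm_num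

private lemma key (n : ℕ) :
    ((!![0, -1, 0, 1; -1, 0, 1, 0; 0, 1, 0, 1; 1, 0, 1, 0] :
      Matrix (Fin 4) (Fin 4) ℂ) ^ n) 0 2 = 0 ∧
    ((!![0, -1, 0, 1; -1, 0, 1, 0; 0, 1, 0, 1; 1, 0, 1, 0] :
      Matrix (Fin 4) (Fin 4) ℂ) ^ n) 1 3 = 0 := by
  induction n using Nat.twoStepInduction with
  | zero => simp [Matrix.one_apply]
  | one => simp
  | more n ih _ =>
    have : (!![0, -1, 0, 1; -1, 0, 1, 0; 0, 1, 0, 1; 1, 0, 1, 0] :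
        Matrix (Fin 4) (Fin 4) ℂ) ^ (n + 2) =
        (2 : ℂ) • (!![0, -1, 0, 1; -1, 0, 1, 0; 0, 1, 0, 1; 1, 0, 1, 0] :
        Matrix (Fin 4) (Fin 4) ℂ) ^ n := by
      rw [pow_add, Msq]
      rw [Matrix.mul_smul, Matrix.mul_one]
    rw [this]
    simp [ih.1, ih.2]

open Matrix Complex in
theorem stmt_12 (M : Matrix (Fin 4) (Fin 4) ℂ)
    (hM : M = !![0, -1, 0, 1; -1, 0, 1, 0; 0, 1, 0, 1; 1, 0, 1, 0]) :
    ∀ t : ℝ, (NormedSpace.exp ((Complex.I * t) • M)) 0 2 = 0 ∧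
      (NormedSpace.exp ((Complex.I * t) • M)) 1 3 = 0 := by
  intro t
  set A : Matrix (Fin 4) (Fin 4) ℂ := (Complex.I * t) • M with hA
  have hAn : ∀ n, (A ^ n) 0 2 = 0 ∧ (A ^ n) 1 3 = 0 := by
    intro n
    rw [hA, smul_pow, hM]
    constructor <;> simp [Matrix.smul_apply, (key n).1, (key n).2]
  rw [NormedSpace.exp_eq_tsum (𝕂 := ℂ)]
  beta_reduce
  by_cases h : Summable (fun n : ℕ => (n.factorial : ℂ)⁻¹ • A ^ n)
  · have h0 : ∀ (i j : Fin 4), (∑' n : ℕ, (n.factorial : ℂ)⁻¹ • A ^ n) i j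
        = ∑' n : ℕ, ((n.factorial : ℂ)⁻¹ • A ^ n) i j := by
      intro i j
      rw [show (∑' n : ℕ, (n.factorial : ℂ)⁻¹ • A ^ n) i = ∑' n : ℕ, ((n.factorial : ℂ)⁻¹ • A ^ n) i from tsum_apply h, tsum_apply]
      exact (Pi.summable.mp h) i
    constructor <;> rw [h0] <;> simp [Matrix.smul_apply, (hAn _).1, (hAn _).2]
  · rw [tsum_eq_zero_of_not_summable h]
    simp
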